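/- If a ball B in R^m is tangent externally to three pairwise disjoint unit balls B₁, B₂, B₃ (i.e., B has radius ρ and its center is at distance ρ + 1 from each of the three unit-ball centers, and the three unit-ball centers are pairwise at distance ≥ 2), then ρ ≥ 2/√3 − 1. -/

import Mathlib

/-- If a ball of radius `ρ` in `ℝ^m` is tangent externally to three pairwise disjoint unit
balls, then `ρ ≥ 2/√3 - 1`. -/
theorem tangent_ball_radius_bound (m : ℕ) (hm : 2 ≤ m) (ρ : ℝ) (hρ : 0 ≤ ρ)
    (c c₁ c₂ c₃ : EuclideanSpace ℝ (Fin m))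
    (h1 : dist c c₁ = ρ + 1) (h2 : dist c c₂ = ρ + 1) (h3 : dist c c₃ = ρ + 1)
    (h12 : 2 ≤ dist c₁ c₂) (h13 : 2 ≤ dist c₁ c₃) (h23 : 2 ≤ dist c₂ c₃) :
    2 / Real.sqrt 3 - 1 ≤ ρ := by
  set v₁ : EuclideanSpace ℝ (Fin m) := c₁ - c with hv₁
  set v₂ : EuclideanSpace ℝ (Fin m) := c₂ - c with hv₂
  set v₃ : EuclideanSpace ℝ (Fin m) := c₃ - c with hv₃
  have n1 : ‖v₁‖ = ρ + 1 := by rw [hv₁, ← dist_eq_norm, dist_comm]; exact h1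
  have n2 : ‖v₂‖ = ρ + 1 := by rw [hv₂, ← dist_eq_norm, dist_comm]; exact h2
  have n3 : ‖v₃‖ = ρ + 1 := by rw [hv₃, ← dist_eq_norm, dist_comm]; exact h3
  have d12 : 2 ≤ ‖v₁ - v₂‖ := by
    rw [hv₁, hv₂, sub_sub_sub_cancel_right, ← dist_eq_norm]; exact h12
  have d13 : 2 ≤ ‖v₁ - v₃‖ := by
    rw [hv₁, hv₃, sub_sub_sub_cancel_right, ← dist_eq_norm]; exact h13
  have d23 : 2 ≤ ‖v₂ - v₃‖ := by
    rw [hv₂, hv₃, sub_sub_sub_cancel_right, ← dist_eq_norm]; exact h23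
  have e12 : ‖v₁ - v₂‖ ^ 2 = ‖v₁‖ ^ 2 - 2 * inner ℝ v₁ v₂ + ‖v₂‖ ^ 2 :=
    norm_sub_sq_real v₁ v₂
  have e13 : ‖v₁ - v₃‖ ^ 2 = ‖v₁‖ ^ 2 - 2 * inner ℝ v₁ v₃ + ‖v₃‖ ^ 2 :=
    norm_sub_sq_real v₁ v₃
  have e23 : ‖v₂ - v₃‖ ^ 2 = ‖v₂‖ ^ 2 - 2 * inner ℝ v₂ v₃ + ‖v₃‖ ^ 2 :=
    norm_sub_sq_real v₂ v₃
  have esum : ‖v₁ + v₂ + v₃‖ ^ 2 =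
      ‖v₁‖ ^ 2 + ‖v₂‖ ^ 2 + ‖v₃‖ ^ 2 +
        2 * inner ℝ v₁ v₂ + 2 * inner ℝ v₁ v₃ + 2 * inner ℝ v₂ v₃ := by
    rw [norm_add_sq_real, norm_add_sq_real, inner_add_left]
    ring
  have s12 : (4 : ℝ) ≤ ‖v₁ - v₂‖ ^ 2 := by
    calc (4:ℝ) = 2 ^ 2 := by norm_num
    _ ≤ ‖v₁ - v₂‖ ^ 2 := pow_le_pow_left₀ (by norm_num) d12 2
  have s13 : (4 : ℝ) ≤ ‖v₁ - v₃‖ ^ 2 := by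
    calc (4:ℝ) = 2 ^ 2 := by norm_num
    _ ≤ ‖v₁ - v₃‖ ^ 2 := pow_le_pow_left₀ (by norm_num) d13 2
  have s23 : (4 : ℝ) ≤ ‖v₂ - v₃‖ ^ 2 := by
    calc (4:ℝ) = 2 ^ 2 := by norm_num
    _ ≤ ‖v₂ - v₃‖ ^ 2 := pow_le_pow_left₀ (by norm_num) d23 2
  have h0 : (0 : ℝ) ≤ ‖v₁ + v₂ + v₃‖ ^ 2 := sq_nonneg _
  simp only [n1, n2, n3] at e12 e13 e23 esum
  rw [esum] at h0
  rw [e12] at s12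
  rw [e13] at s13
  rw [e23] at s23
  have hsq : (4 : ℝ) / 3 ≤ (ρ + 1) ^ 2 := by linarith
  have hs : Real.sqrt 3 ^ 2 = 3 := Real.sq_sqrt (by norm_num)
  have hspos : 0 < Real.sqrt 3 := Real.sqrt_pos.mpr (by norm_num)
  rw [div_sub' (ne_of_gt hspos), div_le_iff₀ hspos, sub_le_iff_le_add]
  nlinarith [hsq, hs, hspos, mul_nonneg (add_nonneg hρ zero_le_one) hspos.le]
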